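/- Fix s ≥ 0, 0 ≤ b < 1/2, and a sign σ ∈ {+1, −1}. There exist M₀ = M₀(s) and, for each M ≥ M₀, a constant C > 0 such that for every ξ ≠ 0 the integral operator with kernel K³_ξ(η,(θ,λ)) := (⟨ξ² + η²⟩^{s/2} / ⟨ξ² + θ²⟩^{s/2}) · (|η|/|ξ|) · ⟨λ − ξ⁵ + θ²/ξ⟩^{b−1} ⟨(θ² + σ η²)/ξ⟩^{−M} is bounded from L²_{θ,λ}(ℝ²) to L²_η(ℝ) with operator norm at most C, uniformly in ξ. -/

import Mathlib

open MeasureTheory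
open scoped ENNReal

/-- Japanese bracket `⟨x⟩ = (1 + x²)^{1/2}`. -/
noncomputable def jap (x : ℝ) : ℝ := Real.sqrt (1 + x ^ 2)

/-- The kernel `K³_ξ(η,(θ,λ))` from the Kato smoothing estimate for the Duhamel term. -/
noncomputable def K3ker (s b M σ ξ η θ lam : ℝ) : ℝ :=
  (jap (ξ ^ 2 + η ^ 2) ^ (s/2) / jap (ξ ^ 2 + θ ^ 2) ^ (s/2)) * (|η| / |ξ|) *
    jap (lam - ξ ^ 5 + θ ^ 2 / ξ) ^ (b - 1) *
    jap ((θ ^ 2 + σ * η ^ 2) / ξ) ^ (-M)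


lemma jap_pos (x : ℝ) : 0 < jap x := Real.sqrt_pos.2 (by positivity)
lemma jap_nonneg (x : ℝ) : 0 ≤ jap x := (jap_pos x).le
lemma jap_sq (x : ℝ) : jap x ^ 2 = 1 + x ^ 2 := Real.sq_sqrt (by positivity)
lemma one_le_jap (x : ℝ) : 1 ≤ jap x := by
  have := jap_sq x
  nlinarith [jap_pos x, sq_nonneg x]
lemma jap_mono {x y : ℝ} (h : |x| ≤ |y|) : jap x ≤ jap y := by
  apply Real.sqrt_le_sqrt
  nlinarith [sq_abs x, sq_abs y, abs_nonneg x, abs_nonneg y]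
lemma jap_ratio (x y : ℝ) : jap x ≤ Real.sqrt 2 * jap y * jap ((x - y) / jap y) := by
  have hy := jap_pos y
  have h1 : Real.sqrt 2 * jap y = Real.sqrt (2 * (1 + y ^ 2)) := by
    rw [Real.sqrt_mul (by norm_num), jap]
  have h2 : Real.sqrt (2 * (1 + y ^ 2)) * jap ((x - y) / jap y)
      = Real.sqrt (2 * (1 + y ^ 2) * (1 + ((x - y) / jap y) ^ 2)) := by
    rw [jap, ← Real.sqrt_mul (by positivity)]
  rw [h1, h2, jap]
  apply Real.sqrt_le_sqrt
  have h3 : ((x - y) / jap y) ^ 2 = (x - y) ^ 2 / (1 + y ^ 2) := by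
    rw [div_pow, jap_sq]
  rw [h3]
  have h4 : 2 * (1 + y ^ 2) * (1 + (x - y) ^ 2 / (1 + y ^ 2))
      = 2 * (1 + y ^ 2) + 2 * (x - y) ^ 2 := by
    field_simp
  rw [h4]; nlinarith [sq_nonneg (x - 2*y)]

noncomputable def Apart (s M σ ξ η θ : ℝ) : ℝ :=
  (jap (ξ ^ 2 + η ^ 2) ^ (s/2) / jap (ξ ^ 2 + θ ^ 2) ^ (s/2)) * (|η| / |ξ|) *
    jap ((θ ^ 2 + σ * η ^ 2) / ξ) ^ (-M)

lemma abs_sub_sq_le {σ : ℝ} (hσ : σ = 1 ∨ σ = -1) (η θ : ℝ) :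
    |η ^ 2 - θ ^ 2| ≤ |θ ^ 2 + σ * η ^ 2| := by
  rcases hσ with h | h <;> subst h
  · rw [abs_of_nonneg (by positivity : (0:ℝ) ≤ θ ^ 2 + 1 * η ^ 2)]
    rw [abs_sub_comm, abs_sub_le_iff]
    constructor <;> nlinarith [sq_nonneg η, sq_nonneg θ]
  · rw [show θ ^ 2 + (-1) * η ^ 2 = -(η ^ 2 - θ ^ 2) by ring, abs_neg]

lemma abs_le_jap_sq_add (ξ θ : ℝ) : |ξ| ≤ jap (ξ ^ 2 + θ ^ 2) := by
  have h1 : jap (ξ ^ 2) ≤ jap (ξ ^ 2 + θ ^ 2) := by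
    apply jap_mono
    rw [abs_of_nonneg (by positivity), abs_of_nonneg (by positivity)]
    nlinarith [sq_nonneg θ]
  refine le_trans ?_ h1
  rw [jap, show (ξ^2)^2 = (ξ^2)^2 from rfl]
  rw [show |ξ| = Real.sqrt (ξ^2) by rw [Real.sqrt_sq_eq_abs]]
  apply Real.sqrt_le_sqrt
  nlinarith [sq_nonneg (ξ^2 - 1)]

lemma ratio_le {s σ ξ : ℝ} (hs : 0 ≤ s) (hσ : σ = 1 ∨ σ = -1) (hξ : ξ ≠ 0) (η θ : ℝ) :
    jap (ξ ^ 2 + η ^ 2) ^ (s/2) / jap (ξ ^ 2 + θ ^ 2) ^ (s/2)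
      ≤ (2:ℝ) ^ (s/4) * jap ((θ ^ 2 + σ * η ^ 2) / ξ) ^ (s/2) := by
  set u := (θ ^ 2 + σ * η ^ 2) / ξ with hu
  have hξ' : (0:ℝ) < |ξ| := abs_pos.2 hξ
  have key : jap (ξ ^ 2 + η ^ 2) ≤ Real.sqrt 2 * jap (ξ ^ 2 + θ ^ 2) * jap u := by
    refine (jap_ratio (ξ ^ 2 + η ^ 2) (ξ ^ 2 + θ ^ 2)).trans ?_
    have h1 : jap ((ξ ^ 2 + η ^ 2 - (ξ ^ 2 + θ ^ 2)) / jap (ξ ^ 2 + θ ^ 2)) ≤ jap u := by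
      apply jap_mono
      rw [show ξ ^ 2 + η ^ 2 - (ξ ^ 2 + θ ^ 2) = η ^ 2 - θ ^ 2 by ring, abs_div, abs_div,
        abs_of_nonneg (jap_nonneg _)]
      exact div_le_div₀ (abs_nonneg _) (abs_sub_sq_le hσ η θ) hξ' (abs_le_jap_sq_add ξ θ)
    have h0 : 0 ≤ Real.sqrt 2 * jap (ξ ^ 2 + θ ^ 2) :=
      mul_nonneg (Real.sqrt_nonneg 2) (jap_nonneg _)
    exact mul_le_mul_of_nonneg_left h1 h0
  have hpow : jap (ξ ^ 2 + η ^ 2) ^ (s/2)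
      ≤ (2:ℝ) ^ (s/4) * jap (ξ ^ 2 + θ ^ 2) ^ (s/2) * jap u ^ (s/2) := by
    have h2 : (Real.sqrt 2 * jap (ξ ^ 2 + θ ^ 2) * jap u) ^ (s/2)
        = (Real.sqrt 2) ^ (s/2) * jap (ξ ^ 2 + θ ^ 2) ^ (s/2) * jap u ^ (s/2) := by
      rw [Real.mul_rpow (mul_nonneg (Real.sqrt_nonneg 2) (jap_nonneg _)) (jap_nonneg _),
        Real.mul_rpow (Real.sqrt_nonneg 2) (jap_nonneg _)]
    have h3 : (Real.sqrt 2) ^ (s/2) = (2:ℝ) ^ (s/4) := by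
      rw [Real.sqrt_eq_rpow, ← Real.rpow_mul (by norm_num)]
      congr 1; ring
    calc jap (ξ ^ 2 + η ^ 2) ^ (s/2)
        ≤ (Real.sqrt 2 * jap (ξ ^ 2 + θ ^ 2) * jap u) ^ (s/2) :=
          Real.rpow_le_rpow (jap_nonneg _) key (by positivity)
      _ = (2:ℝ) ^ (s/4) * jap (ξ ^ 2 + θ ^ 2) ^ (s/2) * jap u ^ (s/2) := by rw [h2, h3]
  rw [div_le_iff₀ (Real.rpow_pos_of_pos (jap_pos _) _)]
  calc jap (ξ ^ 2 + η ^ 2) ^ (s/2)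
      ≤ (2:ℝ) ^ (s/4) * jap (ξ ^ 2 + θ ^ 2) ^ (s/2) * jap u ^ (s/2) := hpow
    _ = (2:ℝ) ^ (s/4) * jap u ^ (s/2) * jap (ξ ^ 2 + θ ^ 2) ^ (s/2) := by ring

lemma apart_le {s M σ ξ : ℝ} (hs : 0 ≤ s) (hσ : σ = 1 ∨ σ = -1) (hM : s/2 + 2 ≤ M)
    (hξ : ξ ≠ 0) (η θ : ℝ) :
    Apart s M σ ξ η θ
      ≤ (2:ℝ) ^ (s/4) * ((|η| / |ξ|) * (1 + ((θ ^ 2 + σ * η ^ 2) / ξ) ^ 2)⁻¹) := by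
  set u := (θ ^ 2 + σ * η ^ 2) / ξ with hu
  have h1 : Apart s M σ ξ η θ
      ≤ ((2:ℝ) ^ (s/4) * jap u ^ (s/2)) * ((|η| / |ξ|) * jap u ^ (-M)) := by
    rw [Apart]
    have := ratio_le hs hσ hξ η θ
    have h0 : 0 ≤ (|η| / |ξ|) * jap u ^ (-M) :=
      mul_nonneg (div_nonneg (abs_nonneg _) (abs_nonneg _)) (Real.rpow_nonneg (jap_nonneg _) _)
    calc jap (ξ ^ 2 + η ^ 2) ^ (s/2) / jap (ξ ^ 2 + θ ^ 2) ^ (s/2) * (|η| / |ξ|)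
          * jap u ^ (-M)
        = (jap (ξ ^ 2 + η ^ 2) ^ (s/2) / jap (ξ ^ 2 + θ ^ 2) ^ (s/2))
          * ((|η| / |ξ|) * jap u ^ (-M)) := by ring
      _ ≤ ((2:ℝ) ^ (s/4) * jap u ^ (s/2)) * ((|η| / |ξ|) * jap u ^ (-M)) :=
          mul_le_mul_of_nonneg_right this h0
  refine h1.trans ?_
  have h2 : jap u ^ (s/2) * jap u ^ (-M) = jap u ^ (s/2 + -M) :=
    (Real.rpow_add (jap_pos u) _ _).symm
  have h3 : jap u ^ (s/2 + -M) ≤ jap u ^ (-2 : ℝ) :=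
    Real.rpow_le_rpow_of_exponent_le (one_le_jap u) (by linarith)
  have h4 : jap u ^ (-2 : ℝ) = (1 + u ^ 2)⁻¹ := by
    rw [Real.rpow_neg (jap_nonneg u), show ((2:ℝ) = ((2:ℕ):ℝ)) by norm_num,
      Real.rpow_natCast, jap_sq]
  calc (2:ℝ) ^ (s/4) * jap u ^ (s/2) * ((|η| / |ξ|) * jap u ^ (-M))
      = (2:ℝ) ^ (s/4) * ((|η| / |ξ|) * (jap u ^ (s/2) * jap u ^ (-M))) := by ring
    _ ≤ (2:ℝ) ^ (s/4) * ((|η| / |ξ|) * (1 + u ^ 2)⁻¹) := by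
        rw [h2]
        have : jap u ^ (s/2 + -M) ≤ (1 + u ^ 2)⁻¹ := h4 ▸ h3
        gcongr

lemma keylow {σ : ℝ} (hσ : σ = 1 ∨ σ = -1) (η θ : ℝ) :
    |η| * abs (|θ| - |η|) ≤ |θ ^ 2 + σ * η ^ 2| := by
  rcases hσ with h | h <;> subst h
  · rw [abs_of_nonneg (by positivity : (0:ℝ) ≤ θ ^ 2 + 1 * η ^ 2)]
    rcases le_total |θ| |η| with hc | hc
    · rw [abs_of_nonpos (show |θ| - |η| ≤ 0 by linarith)]
      nlinarith [sq_abs θ, sq_abs η, abs_nonneg θ, abs_nonneg η]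
    · rw [abs_of_nonneg (show (0:ℝ) ≤ |θ| - |η| by linarith)]
      nlinarith [sq_abs θ, sq_abs η, abs_nonneg θ, abs_nonneg η]
  · have h1 : θ ^ 2 + (-1) * η ^ 2 = (|θ| - |η|) * (|θ| + |η|) := by
      have := sq_abs θ; have := sq_abs η; nlinarith
    rw [h1, abs_mul, abs_of_nonneg (by positivity : (0:ℝ) ≤ |θ| + |η|), mul_comm]
    have : |η| ≤ |θ| + |η| := by nlinarith [abs_nonneg θ]
    exact mul_le_mul_of_nonneg_left this (abs_nonneg _)

lemma inv_one_add_sq_mono {u v : ℝ} (h : |v| ≤ |u|) : (1 + u ^ 2)⁻¹ ≤ (1 + v ^ 2)⁻¹ := by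
  have h2 : (0:ℝ) < 1 + v ^ 2 := by positivity
  apply inv_anti₀ h2
  nlinarith [sq_abs u, sq_abs v, abs_nonneg v]

lemma L1 {s M σ ξ : ℝ} (hs : 0 ≤ s) (hσ : σ = 1 ∨ σ = -1) (hM : s/2 + 2 ≤ M)
    (hξ : ξ ≠ 0) (η : ℝ) :
    ∫⁻ θ : ℝ, ENNReal.ofReal (Apart s M σ ξ η θ)
      ≤ ENNReal.ofReal ((2:ℝ) ^ (s/4) * (2 * Real.pi)) := by
  rcases eq_or_ne η 0 with rfl | hη
  · have : ∀ θ : ℝ, Apart s M σ ξ 0 θ = 0 := by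
      intro θ; simp [Apart]
    simp only [this, ENNReal.ofReal_zero, lintegral_zero]
    exact zero_le
  have hξ' : (0:ℝ) < |ξ| := abs_pos.2 hξ
  have hη' : (0:ℝ) < |η| := abs_pos.2 hη
  set c := (2:ℝ) ^ (s/4) with hc
  have hc0 : 0 < c := Real.rpow_pos_of_pos (by norm_num) _
  set k := η / ξ with hk
  have hk0 : k ≠ 0 := div_ne_zero hη hξ
  set H : ℝ → ℝ := fun θ =>
    (c * (|η| / |ξ|)) * ((1 + (k * (θ - |η|)) ^ 2)⁻¹ + (1 + (k * (θ + |η|)) ^ 2)⁻¹) with hH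
  have hAH : ∀ θ, Apart s M σ ξ η θ ≤ H θ := by
    intro θ
    have hap := apart_le hs hσ hM hξ η θ
    rw [← hc] at hap
    refine hap.trans ?_
    simp only [hH]
    have habs : ∀ v : ℝ, |k * v| = (|η| / |ξ|) * |v| := by
      intro v; rw [abs_mul, hk, abs_div]
    have hmain : (1 + ((θ ^ 2 + σ * η ^ 2) / ξ) ^ 2)⁻¹
        ≤ (1 + (k * (θ - |η|)) ^ 2)⁻¹ + (1 + (k * (θ + |η|)) ^ 2)⁻¹ := by
      have hu : |((θ ^ 2 + σ * η ^ 2) / ξ)| = |θ ^ 2 + σ * η ^ 2| / |ξ| := abs_div _ _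
      rcases le_total 0 θ with hθ | hθ
      · have h1 : |k * (θ - |η|)| ≤ |((θ ^ 2 + σ * η ^ 2) / ξ)| := by
          rw [habs, hu, div_mul_eq_mul_div]
          gcongr
          have hkl := keylow hσ η θ
          rw [abs_of_nonneg hθ] at hkl
          exact hkl
        have := inv_one_add_sq_mono h1
        have h2 : (0:ℝ) ≤ (1 + (k * (θ + |η|)) ^ 2)⁻¹ := by positivity
        linarith
      · have h1 : |k * (θ + |η|)| ≤ |((θ ^ 2 + σ * η ^ 2) / ξ)| := by
          rw [habs, hu, div_mul_eq_mul_div]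
          gcongr
          have hkl := keylow hσ η θ
          rw [show |θ| - |η| = -(θ + |η|) by rw [abs_of_nonpos hθ]; ring, abs_neg] at hkl
          exact hkl
        have := inv_one_add_sq_mono h1
        have h2 : (0:ℝ) ≤ (1 + (k * (θ - |η|)) ^ 2)⁻¹ := by positivity
        linarith
    calc c * ((|η| / |ξ|) * (1 + ((θ ^ 2 + σ * η ^ 2) / ξ) ^ 2)⁻¹)
        ≤ c * ((|η| / |ξ|) * ((1 + (k * (θ - |η|)) ^ 2)⁻¹ + (1 + (k * (θ + |η|)) ^ 2)⁻¹)) := by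
          have h3 : (0:ℝ) ≤ |η| / |ξ| := by positivity
          exact mul_le_mul_of_nonneg_left (mul_le_mul_of_nonneg_left hmain h3) hc0.le
      _ = (c * (|η| / |ξ|)) * ((1 + (k * (θ - |η|)) ^ 2)⁻¹ + (1 + (k * (θ + |η|)) ^ 2)⁻¹) := by
          ring
  have hG1 : Integrable (fun θ : ℝ => (1 + (k * (θ - |η|)) ^ 2)⁻¹) :=
    (integrable_inv_one_add_sq.comp_mul_left' hk0).comp_sub_right |η|
  have hG2 : Integrable (fun θ : ℝ => (1 + (k * (θ + |η|)) ^ 2)⁻¹) :=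
    (integrable_inv_one_add_sq.comp_mul_left' hk0).comp_add_right |η|
  have hHint : Integrable H := ((hG1.add hG2).const_mul _)
  have hHnn : ∀ θ, 0 ≤ H θ := by
    intro θ; rw [hH]
    have : (0:ℝ) ≤ |η| / |ξ| := by positivity
    positivity
  have hval : ∫ θ : ℝ, H θ = c * (2 * Real.pi) := by
    rw [hH]
    rw [MeasureTheory.integral_const_mul, integral_add hG1 hG2]
    have e1 : ∫ θ : ℝ, (1 + (k * (θ - |η|)) ^ 2)⁻¹ = |k|⁻¹ * Real.pi := by
      rw [integral_sub_right_eq_self (fun x : ℝ => (1 + (k * x) ^ 2)⁻¹) |η|]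
      rw [MeasureTheory.Measure.integral_comp_mul_left (fun x : ℝ => (1 + x ^ 2)⁻¹) k]
      rw [integral_univ_inv_one_add_sq]
      simp [abs_inv]
    have e2 : ∫ θ : ℝ, (1 + (k * (θ + |η|)) ^ 2)⁻¹ = |k|⁻¹ * Real.pi := by
      rw [integral_add_right_eq_self (fun x : ℝ => (1 + (k * x) ^ 2)⁻¹) |η|]
      rw [MeasureTheory.Measure.integral_comp_mul_left (fun x : ℝ => (1 + x ^ 2)⁻¹) k]
      rw [integral_univ_inv_one_add_sq]
      simp [abs_inv]
    rw [e1, e2]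
    have hkabs : |k| = |η| / |ξ| := by rw [hk, abs_div]
    rw [hkabs]
    field_simp
    ring
  calc ∫⁻ θ : ℝ, ENNReal.ofReal (Apart s M σ ξ η θ)
      ≤ ∫⁻ θ : ℝ, ENNReal.ofReal (H θ) :=
        lintegral_mono fun θ => ENNReal.ofReal_le_ofReal (hAH θ)
    _ = ENNReal.ofReal (∫ θ : ℝ, H θ) :=
        (MeasureTheory.ofReal_integral_eq_lintegral_ofReal hHint
          (Filter.Eventually.of_forall hHnn)).symm
    _ = ENNReal.ofReal ((2:ℝ) ^ (s/4) * (2 * Real.pi)) := by rw [hval]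

lemma halfLinBound {g : ℝ → ℝ} (hg : Integrable g) (hgnn : ∀ t, 0 ≤ g t) (sset : Set ℝ)
    (hms : MeasurableSet sset) (hinj : Set.InjOn (fun x : ℝ => x ^ 2) sset) :
    ∫⁻ x in sset, ENNReal.ofReal (|2 * x| * g (x ^ 2))
      ≤ ENNReal.ofReal (∫ t : ℝ, g t) := by
  have hderiv : ∀ x ∈ sset, HasDerivWithinAt (fun x : ℝ => x ^ 2) (2 * x) sset x := by
    intro x _
    simpa using (hasDerivAt_pow 2 x).hasDerivWithinAt
  have him_int : IntegrableOn g ((fun x : ℝ => x ^ 2) '' sset) := hg.integrableOn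
  have h2 : IntegrableOn (fun x => |2 * x| • g (x ^ 2)) sset :=
    (integrableOn_image_iff_integrableOn_abs_deriv_smul hms hderiv hinj g).mp him_int
  have hval : ∫ x in sset, |2 * x| • g (x ^ 2)
      = ∫ t in (fun x : ℝ => x ^ 2) '' sset, g t :=
    (integral_image_eq_integral_abs_deriv_smul hms hderiv hinj g).symm
  calc ∫⁻ x in sset, ENNReal.ofReal (|2 * x| * g (x ^ 2))
      = ENNReal.ofReal (∫ x in sset, |2 * x| • g (x ^ 2)) := by
        rw [MeasureTheory.ofReal_integral_eq_lintegral_ofReal h2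
          (Filter.Eventually.of_forall fun x => by
            simpa [smul_eq_mul] using mul_nonneg (abs_nonneg (2*x)) (hgnn (x ^ 2)))]
        simp [smul_eq_mul]
    _ = ENNReal.ofReal (∫ t in (fun x : ℝ => x ^ 2) '' sset, g t) := by rw [hval]
    _ ≤ ENNReal.ofReal (∫ t : ℝ, g t) :=
        ENNReal.ofReal_le_ofReal
          (setIntegral_le_integral hg (Filter.Eventually.of_forall hgnn))

lemma sq_injOn_Ici : Set.InjOn (fun x : ℝ => x ^ 2) (Set.Ici 0) := by
  intro a ha b hb h
  simp only [Set.mem_Ici] at ha hb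
  have h' : Real.sqrt (a ^ 2) = Real.sqrt (b ^ 2) := by rw [show a^2 = (fun x:ℝ=>x^2) a from rfl, h]
  rwa [Real.sqrt_sq ha, Real.sqrt_sq hb] at h'

lemma sq_injOn_Iio : Set.InjOn (fun x : ℝ => x ^ 2) (Set.Iio 0) := by
  intro a ha b hb h
  simp only [Set.mem_Iio] at ha hb
  have h' : Real.sqrt (a ^ 2) = Real.sqrt (b ^ 2) := by rw [show a^2 = (fun x:ℝ=>x^2) a from rfl, h]
  rw [Real.sqrt_sq_eq_abs, Real.sqrt_sq_eq_abs, abs_of_neg ha, abs_of_neg hb] at h'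
  linarith

lemma L2 {s M σ ξ : ℝ} (hs : 0 ≤ s) (hσ : σ = 1 ∨ σ = -1) (hM : s/2 + 2 ≤ M)
    (hξ : ξ ≠ 0) (θ : ℝ) :
    ∫⁻ η : ℝ, ENNReal.ofReal (Apart s M σ ξ η θ)
      ≤ ENNReal.ofReal ((2:ℝ) ^ (s/4) * Real.pi) := by
  have hξ' : (0:ℝ) < |ξ| := abs_pos.2 hξ
  set c := (2:ℝ) ^ (s/4) with hc
  have hc0 : 0 < c := Real.rpow_pos_of_pos (by norm_num) _
  have hσ1 : |σ| = 1 := by rcases hσ with h | h <;> simp [h]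
  have hσ0 : σ ≠ 0 := by rcases hσ with h | h <;> simp [h]
  set g : ℝ → ℝ := fun t => (c / (2 * |ξ|)) * (1 + ((θ ^ 2 + σ * t) / ξ) ^ 2)⁻¹ with hg
  have hgnn : ∀ t, 0 ≤ g t := by
    intro t; rw [hg]
    have : (0:ℝ) ≤ c / (2 * |ξ|) := by positivity
    positivity
  have hgeq : g = fun t => (c / (2 * |ξ|)) * (1 + (σ/ξ * (t + σ * θ ^ 2)) ^ 2)⁻¹ := by
    funext t
    rw [hg]
    have hσ2 : σ * σ = 1 := by rcases hσ with h | h <;> rw [h] <;> norm_num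
    have h1 : σ/ξ * (t + σ * θ ^ 2) = (θ ^ 2 + σ * t)/ξ := by
      field_simp
      linear_combination θ ^ 2 * hσ2
    rw [h1]
  have hgint : Integrable g := by
    rw [hgeq]
    exact ((integrable_inv_one_add_sq.comp_mul_left'
      (div_ne_zero hσ0 hξ)).comp_add_right (σ * θ ^ 2)).const_mul _
  have hgval : ∫ t : ℝ, g t = c * Real.pi / 2 := by
    rw [hgeq, MeasureTheory.integral_const_mul]
    rw [integral_add_right_eq_self (fun x : ℝ => (1 + (σ/ξ * x) ^ 2)⁻¹) (σ * θ ^ 2)]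
    rw [MeasureTheory.Measure.integral_comp_mul_left (fun x : ℝ => (1 + x ^ 2)⁻¹) (σ/ξ)]
    rw [integral_univ_inv_one_add_sq]
    have : |(σ/ξ)⁻¹| = |ξ| := by
      rw [abs_inv, abs_div, hσ1]; field_simp
    rw [smul_eq_mul, this]
    field_simp
  have hmaj : ∀ η, Apart s M σ ξ η θ ≤ |2 * η| * g (η ^ 2) := by
    intro η
    refine (apart_le hs hσ hM hξ η θ).trans ?_
    rw [hg]
    have h2η : |2 * η| = 2 * |η| := by rw [abs_mul]; norm_num
    rw [h2η, ← hc]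
    have : (0:ℝ) ≤ (1 + ((θ ^ 2 + σ * η ^ 2) / ξ) ^ 2)⁻¹ := by positivity
    have heq : 2 * |η| * (c / (2 * |ξ|) * (1 + ((θ ^ 2 + σ * η ^ 2) / ξ) ^ 2)⁻¹)
        = c * (|η| / |ξ| * (1 + ((θ ^ 2 + σ * η ^ 2) / ξ) ^ 2)⁻¹) := by
      field_simp
    rw [heq]
  calc ∫⁻ η : ℝ, ENNReal.ofReal (Apart s M σ ξ η θ)
      ≤ ∫⁻ η : ℝ, ENNReal.ofReal (|2 * η| * g (η ^ 2)) :=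
        lintegral_mono fun η => ENNReal.ofReal_le_ofReal (hmaj η)
    _ = (∫⁻ η in Set.Iio (0:ℝ), ENNReal.ofReal (|2 * η| * g (η ^ 2)))
        + ∫⁻ η in Set.Ici (0:ℝ), ENNReal.ofReal (|2 * η| * g (η ^ 2)) := by
        rw [← lintegral_union measurableSet_Ici (Set.Iio_disjoint_Ici le_rfl),
          Set.Iio_union_Ici, Measure.restrict_univ]
    _ ≤ ENNReal.ofReal (∫ t : ℝ, g t) + ENNReal.ofReal (∫ t : ℝ, g t) := by
        gcongr
        · exact halfLinBound hgint hgnn _ measurableSet_Iio sq_injOn_Iio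
        · exact halfLinBound hgint hgnn _ measurableSet_Ici sq_injOn_Ici
    _ = ENNReal.ofReal (c * Real.pi) := by
        rw [hgval, ← ENNReal.ofReal_add (by positivity) (by positivity)]
        congr 1
        ring

noncomputable def Bpart (b ξ θ lam : ℝ) : ℝ := jap (lam - ξ ^ 5 + θ ^ 2 / ξ) ^ (b - 1)

lemma ennreal_rpow_two (x : ℝ≥0∞) : x ^ (2:ℝ) = x * x := by
  rw [show (2:ℝ) = ((2:ℕ):ℝ) by norm_num, ENNReal.rpow_natCast, pow_two]

lemma L3 {b : ℝ} (hb0 : 0 ≤ b) (hb1 : b < 1/2) (a : ℝ) :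
    ∫⁻ lam : ℝ, (ENNReal.ofReal (jap (lam - a) ^ (b - 1))) ^ (2:ℝ)
      ≤ ENNReal.ofReal (∫ x : ℝ, (1 + x ^ 2) ^ (b - 1)) := by
  have hint : Integrable (fun x : ℝ => (1 + x ^ 2) ^ (b - 1)) := by
    have h := integrable_rpow_neg_one_add_norm_sq (E := ℝ) (μ := volume)
      (r := 2 - 2 * b) (by simp; linarith)
    simp only [Real.norm_eq_abs, sq_abs, show -(2 - 2*b)/2 = b - 1 by ring] at h
    exact h
  have hptw : ∀ z : ℝ, (ENNReal.ofReal (jap z ^ (b - 1))) ^ (2:ℝ)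
      = ENNReal.ofReal ((1 + z ^ 2) ^ (b - 1)) := by
    intro z
    rw [ENNReal.ofReal_rpow_of_nonneg (Real.rpow_nonneg (jap_nonneg _) _) (by norm_num)]
    congr 1
    rw [jap, Real.sqrt_eq_rpow, ← Real.rpow_mul (by positivity),
      ← Real.rpow_mul (by positivity)]
    congr 1
    ring
  calc ∫⁻ lam : ℝ, (ENNReal.ofReal (jap (lam - a) ^ (b - 1))) ^ (2:ℝ)
      = ∫⁻ lam : ℝ, ENNReal.ofReal ((1 + (lam - a) ^ 2) ^ (b - 1)) := by
        exact lintegral_congr fun lam => hptw _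
    _ = ENNReal.ofReal (∫ lam : ℝ, (1 + (lam - a) ^ 2) ^ (b - 1)) :=
        (MeasureTheory.ofReal_integral_eq_lintegral_ofReal (hint.comp_sub_right a)
          (Filter.Eventually.of_forall fun x => Real.rpow_nonneg (by positivity) _)).symm
    _ ≤ ENNReal.ofReal (∫ x : ℝ, (1 + x ^ 2) ^ (b - 1)) := le_of_eq (by
        rw [integral_sub_right_eq_self (fun x : ℝ => (1 + x ^ 2) ^ (b - 1)) a])

lemma continuous_jap : Continuous jap :=
  Real.continuous_sqrt.comp (by fun_prop)

lemma continuous_jap_rpow {α : Type*} [TopologicalSpace α] {f : α → ℝ}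
    (hf : Continuous f) (e : ℝ) : Continuous fun x => jap (f x) ^ e :=
  (continuous_jap.comp hf).rpow_const fun x => Or.inl (jap_pos _).ne'

lemma contA (s M σ ξ : ℝ) : Continuous fun q : ℝ × ℝ => Apart s M σ ξ q.1 q.2 := by
  unfold Apart
  apply Continuous.mul
  apply Continuous.mul
  · exact (continuous_jap_rpow (by fun_prop) (s/2)).div
      (continuous_jap_rpow (by fun_prop) (s/2))
      fun q => (Real.rpow_pos_of_pos (jap_pos _) _).ne'
  · exact (continuous_fst.abs).div_const _
  · exact continuous_jap_rpow (by fun_prop) (-M)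

lemma contB (b ξ : ℝ) : Continuous fun p : ℝ × ℝ => Bpart b ξ p.1 p.2 := by
  unfold Bpart
  exact continuous_jap_rpow (by fun_prop) (b - 1)

/-- For `s ≥ 0`, `0 ≤ b < 1/2`, a sign `σ = ±1`, and `M` large enough depending on `s`,
the integral operator with kernel `K³_ξ` is bounded from `L²_{θ,λ}(ℝ²)` to `L²_η(ℝ)`
uniformly in `ξ ≠ 0`. -/
theorem stmt14 (s b σ : ℝ) (hs : 0 ≤ s) (hb0 : 0 ≤ b) (hb1 : b < 1/2)
    (hσ : σ = 1 ∨ σ = -1) :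
    ∃ M₀ : ℝ, ∀ M : ℝ, M₀ ≤ M → ∃ C > (0:ℝ), ∀ ξ : ℝ, ξ ≠ 0 →
      ∀ f : ℝ × ℝ → ℝ, MemLp f 2 volume →
        eLpNorm (fun η : ℝ => ∫ p : ℝ × ℝ, K3ker s b M σ ξ η p.1 p.2 * f p) 2 volume ≤
          ENNReal.ofReal C * eLpNorm f 2 volume := by
  refine ⟨s/2 + 2, fun M hM => ?_⟩
  set Cb := ∫ x : ℝ, (1 + x ^ 2) ^ (b - 1) with hCbdef
  have hCb0 : 0 ≤ Cb := integral_nonneg fun x => Real.rpow_nonneg (by positivity) _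
  set c := (2:ℝ) ^ (s/4) with hcdef
  have hc0 : 0 < c := Real.rpow_pos_of_pos (by norm_num) _
  set K₁ := c * (2 * Real.pi) with hK1def
  set K₂ := c * Real.pi with hK2def
  have hpi := Real.pi_pos
  have hK10 : 0 ≤ K₁ := by positivity
  have hK20 : 0 ≤ K₂ := by positivity
  set total := Cb * K₁ * K₂ with htotdef
  have htot0 : 0 ≤ total := by positivity
  refine ⟨Real.sqrt total + 1, by positivity, fun ξ hξ f hf => ?_⟩
  set Tf : ℝ → ℝ := fun η => ∫ p : ℝ × ℝ, K3ker s b M σ ξ η p.1 p.2 * f p with hTfdef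
  set F : ℝ × ℝ → ℝ≥0∞ := fun p => (‖f p‖₊ : ℝ≥0∞) with hFdef
  have hFmeas : AEMeasurable F volume := hf.1.enorm
  set aA : ℝ → ℝ → ℝ≥0∞ := fun η θ => ENNReal.ofReal (Apart s M σ ξ η θ) with haAdef
  set bB : ℝ × ℝ → ℝ≥0∞ := fun p => ENNReal.ofReal (Bpart b ξ p.1 p.2) with hbBdef
  have hApos : ∀ η θ, 0 ≤ Apart s M σ ξ η θ := fun η θ =>
    mul_nonneg (mul_nonneg (div_nonneg (Real.rpow_nonneg (jap_nonneg _) _)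
      (Real.rpow_nonneg (jap_nonneg _) _)) (div_nonneg (abs_nonneg _) (abs_nonneg _)))
      (Real.rpow_nonneg (jap_nonneg _) _)
  have hBpos : ∀ θ lam, 0 ≤ Bpart b ξ θ lam := fun θ lam => Real.rpow_nonneg (jap_nonneg _) _
  have hKsplit : ∀ η (p : ℝ × ℝ), K3ker s b M σ ξ η p.1 p.2
      = Apart s M σ ξ η p.1 * Bpart b ξ p.1 p.2 := by
    intro η p; simp only [K3ker, Apart, Bpart]; ring
  have hKpos : ∀ η (p : ℝ × ℝ), 0 ≤ K3ker s b M σ ξ η p.1 p.2 := fun η p => by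
    rw [hKsplit]; exact mul_nonneg (hApos _ _) (hBpos _ _)
  -- measurability
  have hmeasA2 : ∀ η, Measurable fun p : ℝ × ℝ => aA η p.1 := fun η =>
    (((contA s M σ ξ).comp ((continuous_const :
      Continuous fun _ : ℝ × ℝ => η).prodMk continuous_fst)).measurable).ennreal_ofReal
  have hmeasAη : ∀ θ, Measurable fun η : ℝ => aA η θ := fun θ =>
    (((contA s M σ ξ).comp (continuous_id.prodMk continuous_const)).measurable).ennreal_ofReal
  have hmeasAθ : ∀ η, Measurable fun θ : ℝ => aA η θ := fun η =>
    (((contA s M σ ξ).comp (continuous_const.prodMk continuous_id)).measurable).ennreal_ofReal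
  have hmeasB : Measurable bB := (contB b ξ).measurable.ennreal_ofReal
  set sqA : ℝ → ℝ → ℝ≥0∞ := fun η θ =>
    ENNReal.ofReal (Real.sqrt (Apart s M σ ξ η θ)) with hsqdef
  have hsq_mul : ∀ η θ, sqA η θ * sqA η θ = aA η θ := by
    intro η θ
    rw [hsqdef, haAdef, ← ENNReal.ofReal_mul (Real.sqrt_nonneg _),
      Real.mul_self_sqrt (hApos η θ)]
  have hmeas_sq : ∀ η, Measurable fun p : ℝ × ℝ => sqA η p.1 := fun η =>
    ((Real.continuous_sqrt.comp ((contA s M σ ξ).comp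
      ((continuous_const : Continuous fun _ : ℝ × ℝ => η).prodMk
        continuous_fst))).measurable).ennreal_ofReal
  -- Step 1 : pointwise domination of the Bochner integral
  have step1 : ∀ η : ℝ, (‖Tf η‖₊ : ℝ≥0∞) ≤ ∫⁻ p : ℝ × ℝ, aA η p.1 * bB p * F p := by
    intro η
    refine (enorm_integral_le_lintegral_enorm _).trans_eq ?_
    refine lintegral_congr fun p => ?_
    rw [enorm_mul, Real.enorm_eq_ofReal (hKpos η p), hKsplit η p,
      ENNReal.ofReal_mul (hApos _ _)]
    rfl
  -- Step 2 : Cauchy-Schwarz in (θ, λ)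
  have hCS : ∀ η : ℝ, ∫⁻ p : ℝ × ℝ, aA η p.1 * bB p * F p
      ≤ (∫⁻ p : ℝ × ℝ, aA η p.1 * bB p ^ (2:ℝ)) ^ (1/2:ℝ)
        * (∫⁻ p : ℝ × ℝ, aA η p.1 * F p ^ (2:ℝ)) ^ (1/2:ℝ) := by
    intro η
    have hpq : Real.HolderConjugate 2 2 := by constructor <;> norm_num
    have h1 : AEMeasurable (fun p : ℝ × ℝ => sqA η p.1 * bB p) volume :=
      ((hmeas_sq η).mul hmeasB).aemeasurable
    have h2 : AEMeasurable (fun p : ℝ × ℝ => sqA η p.1 * F p) volume :=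
      (hmeas_sq η).aemeasurable.mul hFmeas
    have key := ENNReal.lintegral_mul_le_Lp_mul_Lq volume hpq h1 h2
    simp only [Pi.mul_apply] at key
    have e2 : ∀ p : ℝ × ℝ, (sqA η p.1 * bB p) ^ (2:ℝ) = aA η p.1 * bB p ^ (2:ℝ) := by
      intro p
      rw [ENNReal.mul_rpow_of_nonneg _ _ (by norm_num : (0:ℝ) ≤ 2),
        ennreal_rpow_two (sqA η p.1), hsq_mul]
    have e3 : ∀ p : ℝ × ℝ, (sqA η p.1 * F p) ^ (2:ℝ) = aA η p.1 * F p ^ (2:ℝ) := by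
      intro p
      rw [ENNReal.mul_rpow_of_nonneg _ _ (by norm_num : (0:ℝ) ≤ 2),
        ennreal_rpow_two (sqA η p.1), hsq_mul]
    calc ∫⁻ p : ℝ × ℝ, aA η p.1 * bB p * F p
        = ∫⁻ p : ℝ × ℝ, (sqA η p.1 * bB p) * (sqA η p.1 * F p) := by
          refine lintegral_congr fun p => ?_
          rw [show sqA η p.1 * bB p * (sqA η p.1 * F p)
            = (sqA η p.1 * sqA η p.1) * bB p * F p by ring, hsq_mul]
      _ ≤ (∫⁻ p : ℝ × ℝ, (sqA η p.1 * bB p) ^ (2:ℝ)) ^ (1/2:ℝ)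
          * (∫⁻ p : ℝ × ℝ, (sqA η p.1 * F p) ^ (2:ℝ)) ^ (1/2:ℝ) := key
      _ = (∫⁻ p : ℝ × ℝ, aA η p.1 * bB p ^ (2:ℝ)) ^ (1/2:ℝ)
          * (∫⁻ p : ℝ × ℝ, aA η p.1 * F p ^ (2:ℝ)) ^ (1/2:ℝ) := by
          rw [lintegral_congr e2, lintegral_congr e3]
  -- Step 3 : the (θ, λ) integral of aA * bB²
  have hInner1 : ∀ η : ℝ, ∫⁻ p : ℝ × ℝ, aA η p.1 * bB p ^ (2:ℝ)
      ≤ ENNReal.ofReal Cb * ENNReal.ofReal K₁ := by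
    intro η
    have hfuneq : (fun p : ℝ × ℝ => aA η p.1 * bB p ^ (2:ℝ))
        = fun p : ℝ × ℝ => aA η p.1 * (bB p * bB p) := by
      funext p; rw [ennreal_rpow_two]
    have hm : AEMeasurable (fun p : ℝ × ℝ => aA η p.1 * bB p ^ (2:ℝ))
        ((volume : Measure ℝ).prod (volume : Measure ℝ)) := by
      rw [hfuneq, ← MeasureTheory.Measure.volume_eq_prod]
      exact ((hmeasA2 η).mul (hmeasB.mul hmeasB)).aemeasurable
    have hBbound : ∀ θ : ℝ, ∫⁻ lam : ℝ, bB (θ, lam) ^ (2:ℝ) ≤ ENNReal.ofReal Cb := by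
      intro θ
      have : ∀ lam : ℝ, bB (θ, lam)
          = ENNReal.ofReal (jap (lam - (ξ^5 - θ^2/ξ)) ^ (b - 1)) := by
        intro lam
        rw [hbBdef]
        simp only [Bpart]
        congr 2
        ring
      calc ∫⁻ lam : ℝ, bB (θ, lam) ^ (2:ℝ)
          = ∫⁻ lam : ℝ, (ENNReal.ofReal (jap (lam - (ξ^5 - θ^2/ξ)) ^ (b - 1))) ^ (2:ℝ) := by
            exact lintegral_congr fun lam => by rw [this]
        _ ≤ ENNReal.ofReal Cb := L3 hb0 hb1 _
    calc ∫⁻ p : ℝ × ℝ, aA η p.1 * bB p ^ (2:ℝ)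
        = ∫⁻ p, aA η p.1 * bB p ^ (2:ℝ)
            ∂((volume : Measure ℝ).prod (volume : Measure ℝ)) := by
          rw [← MeasureTheory.Measure.volume_eq_prod]
      _ = ∫⁻ θ : ℝ, ∫⁻ lam : ℝ, aA η θ * bB (θ, lam) ^ (2:ℝ) := lintegral_prod _ hm
      _ = ∫⁻ θ : ℝ, aA η θ * ∫⁻ lam : ℝ, bB (θ, lam) ^ (2:ℝ) :=
          lintegral_congr fun θ => lintegral_const_mul' _ _ ENNReal.ofReal_ne_top
      _ ≤ ∫⁻ θ : ℝ, aA η θ * ENNReal.ofReal Cb :=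
          lintegral_mono fun θ => mul_le_mul_right (hBbound θ) _
      _ = (∫⁻ θ : ℝ, aA η θ) * ENNReal.ofReal Cb := lintegral_mul_const _ (hmeasAθ η)
      _ ≤ ENNReal.ofReal K₁ * ENNReal.ofReal Cb :=
          mul_le_mul_left (L1 hs hσ hM hξ η) _
      _ = ENNReal.ofReal Cb * ENNReal.ofReal K₁ := mul_comm _ _
  -- Step 4/5 : combine and integrate in η
  set I2 : ℝ≥0∞ := ∫⁻ p : ℝ × ℝ, F p * F p with hI2def
  have step5 : ∫⁻ η : ℝ, (‖Tf η‖₊ : ℝ≥0∞) ^ (2:ℝ) ≤ ENNReal.ofReal total * I2 := by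
    have hptw : ∀ η : ℝ, (‖Tf η‖₊ : ℝ≥0∞) ^ (2:ℝ)
        ≤ ENNReal.ofReal (Cb * K₁) * ∫⁻ p : ℝ × ℝ, aA η p.1 * (F p * F p) := by
      intro η
      calc (‖Tf η‖₊ : ℝ≥0∞) ^ (2:ℝ)
          ≤ ((∫⁻ p : ℝ × ℝ, aA η p.1 * bB p ^ (2:ℝ)) ^ (1/2:ℝ)
            * (∫⁻ p : ℝ × ℝ, aA η p.1 * F p ^ (2:ℝ)) ^ (1/2:ℝ)) ^ (2:ℝ) :=
            ENNReal.rpow_le_rpow ((step1 η).trans (hCS η)) (by norm_num)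
        _ = (∫⁻ p : ℝ × ℝ, aA η p.1 * bB p ^ (2:ℝ))
            * (∫⁻ p : ℝ × ℝ, aA η p.1 * F p ^ (2:ℝ)) := by
            rw [ENNReal.mul_rpow_of_nonneg _ _ (by norm_num : (0:ℝ) ≤ 2),
              ← ENNReal.rpow_mul, ← ENNReal.rpow_mul]
            norm_num
        _ ≤ (ENNReal.ofReal Cb * ENNReal.ofReal K₁)
            * (∫⁻ p : ℝ × ℝ, aA η p.1 * F p ^ (2:ℝ)) := mul_le_mul_left (hInner1 η) _
        _ = ENNReal.ofReal (Cb * K₁) * ∫⁻ p : ℝ × ℝ, aA η p.1 * (F p * F p) := by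
            rw [← ENNReal.ofReal_mul hCb0]
            congr 1
            exact lintegral_congr fun p => by rw [ennreal_rpow_two]
    have hswap : ∫⁻ η : ℝ, ∫⁻ p : ℝ × ℝ, aA η p.1 * (F p * F p)
        = ∫⁻ p : ℝ × ℝ, ∫⁻ η : ℝ, aA η p.1 * (F p * F p) := by
      apply lintegral_lintegral_swap
      show AEMeasurable (fun q : ℝ × (ℝ × ℝ) => aA q.1 q.2.1 * (F q.2 * F q.2)) _
      apply AEMeasurable.fun_mul
      · exact (((contA s M σ ξ).comp (continuous_fst.prodMk
          (continuous_fst.comp continuous_snd))).measurable).ennreal_ofReal.aemeasurable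
      · have hsnd : AEMeasurable (fun q : ℝ × (ℝ × ℝ) => F q.2)
            ((volume : Measure ℝ).prod (volume : Measure (ℝ × ℝ))) :=
          hFmeas.comp_quasiMeasurePreserving Measure.quasiMeasurePreserving_snd
        exact hsnd.mul hsnd
    calc ∫⁻ η : ℝ, (‖Tf η‖₊ : ℝ≥0∞) ^ (2:ℝ)
        ≤ ∫⁻ η : ℝ, ENNReal.ofReal (Cb * K₁) * ∫⁻ p : ℝ × ℝ, aA η p.1 * (F p * F p) :=
          lintegral_mono hptw
      _ = ENNReal.ofReal (Cb * K₁) * ∫⁻ η : ℝ, ∫⁻ p : ℝ × ℝ, aA η p.1 * (F p * F p) :=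
          lintegral_const_mul' _ _ ENNReal.ofReal_ne_top
      _ = ENNReal.ofReal (Cb * K₁) * ∫⁻ p : ℝ × ℝ, ∫⁻ η : ℝ, aA η p.1 * (F p * F p) := by
          rw [hswap]
      _ = ENNReal.ofReal (Cb * K₁) * ∫⁻ p : ℝ × ℝ, (∫⁻ η : ℝ, aA η p.1) * (F p * F p) := by
          congr 1
          exact lintegral_congr fun p => lintegral_mul_const _ (hmeasAη p.1)
      _ ≤ ENNReal.ofReal (Cb * K₁) * ∫⁻ p : ℝ × ℝ, ENNReal.ofReal K₂ * (F p * F p) := by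
          gcongr with p
          exact L2 hs hσ hM hξ p.1
      _ = ENNReal.ofReal (Cb * K₁) * (ENNReal.ofReal K₂ * I2) := by
          rw [lintegral_const_mul' _ _ ENNReal.ofReal_ne_top, hI2def]
      _ = ENNReal.ofReal total * I2 := by
          rw [← mul_assoc, ← ENNReal.ofReal_mul (mul_nonneg hCb0 hK10), htotdef]
  -- Step 6 : conclude via eLpNorm
  have hTnorm : eLpNorm Tf 2 volume = (∫⁻ η : ℝ, (‖Tf η‖₊ : ℝ≥0∞) ^ (2:ℝ)) ^ (1/2:ℝ) := by
    rw [MeasureTheory.eLpNorm_eq_lintegral_rpow_enorm_toReal (by norm_num) (by norm_num)]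
    norm_num
    rfl
  have hfnorm : eLpNorm f 2 volume = I2 ^ (1/2:ℝ) := by
    rw [MeasureTheory.eLpNorm_eq_lintegral_rpow_enorm_toReal (by norm_num) (by norm_num), hI2def]
    norm_num
    congr 1
    exact lintegral_congr fun p => pow_two _
  rw [hTnorm, hfnorm]
  calc (∫⁻ η : ℝ, (‖Tf η‖₊ : ℝ≥0∞) ^ (2:ℝ)) ^ (1/2:ℝ)
      ≤ (ENNReal.ofReal total * I2) ^ (1/2:ℝ) := ENNReal.rpow_le_rpow step5 (by norm_num)
    _ = (ENNReal.ofReal total) ^ (1/2:ℝ) * I2 ^ (1/2:ℝ) :=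
        ENNReal.mul_rpow_of_nonneg _ _ (by norm_num)
    _ ≤ ENNReal.ofReal (Real.sqrt total + 1) * I2 ^ (1/2:ℝ) := by
        gcongr
        rw [ENNReal.ofReal_rpow_of_nonneg htot0 (by norm_num)]
        apply ENNReal.ofReal_le_ofReal
        rw [← Real.sqrt_eq_rpow]
        linarith
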